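/- Let φ: ℝⁿ → ℝ be twice continuously differentiable with μI ⪯ ∇²φ(x) ⪯ LI for all x, where 0 < μ ≤ L, and let φ⋆ be its minimum value. Suppose g_k = ∇φ(x_k) + e(x_k) with ‖e(x)‖ ≤ ε̄_g for all x. If x_{k+1} = x_k − α g_k with 0 < α ≤ 1/L, then φ(x_{k+1}) − (φ⋆ + ε̄_g²/(2μ)) ≤ (1 − αμ)(φ(x_k) − (φ⋆ + ε̄_g²/(2μ))). -/

import Mathlib

open Set

lemma aux_taylor_1d (f : ℝ → ℝ) (hf : ContDiff ℝ 2 f) :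
    ∃ c ∈ Set.Ioo (0:ℝ) 1, f 1 = f 0 + deriv f 0 + deriv (deriv f) c / 2 := by
  have h01 : (0:ℝ) < 1 := one_pos
  have hu := uniqueDiffOn_Icc h01
  have hder : Differentiable ℝ f := hf.differentiable (by norm_num)
  have hderiv : ContDiff ℝ 1 (deriv f) := by
    have hf' : ContDiff ℝ ((1:ℕ∞)+1) f := by
      exact_mod_cast hf
    exact_mod_cast (contDiff_succ_iff_deriv.mp hf').2.2
  have hdd : Differentiable ℝ (deriv f) := hderiv.differentiable (by norm_num)
  have heq : Set.EqOn (iteratedDerivWithin 1 f (Icc (0:ℝ) 1)) (deriv f) (Icc (0:ℝ) 1) := by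
    intro y hy
    rw [iteratedDerivWithin_one]
    exact (hder y).derivWithin (hu y hy)
  have hdiffon : DifferentiableOn ℝ (iteratedDerivWithin 1 f (Icc (0:ℝ) 1)) (Ioo (0:ℝ) 1) :=
    (hdd.differentiableOn).congr (fun y hy => heq (Ioo_subset_Icc_self hy))
  obtain ⟨c, hc, hT⟩ := taylor_mean_remainder_lagrange (n := 1) (x₀ := 0) (x := 1) h01.ne
    (by rw [uIcc_of_le h01.le]; exact (hf.of_le one_le_two).contDiffOn)
    (by rw [uIcc_of_le h01.le, uIoo_of_le h01.le]; exact hdiffon)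
  rw [uIoo_of_le h01.le] at hc
  rw [uIcc_of_le h01.le] at hT
  refine ⟨c, hc, ?_⟩
  have htay : taylorWithinEval f 1 (Icc (0:ℝ) 1) 0 1 = f 0 + deriv f 0 := by
    rw [taylor_within_apply]
    simp [Finset.sum_range_succ, heq (left_mem_Icc.mpr zero_le_one)]
  have hit2 : iteratedDerivWithin 2 f (Icc (0:ℝ) 1) c = deriv (deriv f) c := by
    have hc' : c ∈ Icc (0:ℝ) 1 := Ioo_subset_Icc_self hc
    rw [show (2:ℕ) = 1 + 1 from rfl, iteratedDerivWithin_succ,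
      derivWithin_congr heq (heq hc')]
    exact (hdd c).derivWithin (hu c hc')
  rw [htay, hit2] at hT
  norm_num [Nat.factorial] at hT
  linarith

lemma aux_taylor {E : Type*} [NormedAddCommGroup E] [InnerProductSpace ℝ E]
    (φ : E → ℝ) (hφ : ContDiff ℝ 2 φ) (x v : E) :
    ∃ z : E, φ (x + v) = φ x + fderiv ℝ φ x v + iteratedFDeriv ℝ 2 φ z ![v, v] / 2 := by
  set ψ : ℝ → ℝ := fun t => φ (x + t • v) with hψdef
  have hcurve : ∀ t : ℝ, HasDerivAt (fun t : ℝ => x + t • v) v t := by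
    intro t
    simpa using ((hasDerivAt_id t).smul_const v).const_add x
  have hψ : ContDiff ℝ 2 ψ :=
    hφ.comp (contDiff_const.add (contDiff_id.smul contDiff_const))
  have hd1 : ∀ t : ℝ, HasDerivAt ψ (fderiv ℝ φ (x + t • v) v) t := fun t =>
    ((hφ.differentiable (by norm_num)) _).hasFDerivAt.comp_hasDerivAt t (hcurve t)
  have hder_eq : deriv ψ = fun t => fderiv ℝ φ (x + t • v) v := funext fun t => (hd1 t).deriv
  have hφ' : Differentiable ℝ (fderiv ℝ φ) := by
    have hφ2 : ContDiff ℝ ((1:ℕ∞)+1) φ := by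
      exact_mod_cast hφ
    exact (contDiff_succ_iff_fderiv.mp hφ2).2.2.differentiable (by norm_num)
  have hd2 : ∀ t : ℝ, HasDerivAt (deriv ψ)
      (iteratedFDeriv ℝ 2 φ (x + t • v) ![v, v]) t := by
    intro t
    rw [hder_eq]
    have h1 : HasDerivAt (fun t : ℝ => fderiv ℝ φ (x + t • v))
        (fderiv ℝ (fderiv ℝ φ) (x + t • v) v) t :=
      (hφ' _).hasFDerivAt.comp_hasDerivAt t (hcurve t)
    have h2 := h1.clm_apply (hasDerivAt_const t v)
    simp only [map_zero, add_zero] at h2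
    have h3 : iteratedFDeriv ℝ 2 φ (x + t • v) ![v, v]
        = fderiv ℝ (fderiv ℝ φ) (x + t • v) v v := by
      rw [iteratedFDeriv_two_apply]; simp
    rw [h3]
    exact h2
  obtain ⟨c, hc, hT⟩ := aux_taylor_1d ψ hψ
  refine ⟨x + c • v, ?_⟩
  have e1 : ψ 1 = φ (x + v) := by simp [hψdef]
  have e0 : ψ 0 = φ x := by simp [hψdef]
  have ed : deriv ψ 0 = fderiv ℝ φ x v := by rw [hder_eq]; simp
  have edd : deriv (deriv ψ) c = iteratedFDeriv ℝ 2 φ (x + c • v) ![v, v] := (hd2 c).deriv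
  rw [e1, e0, ed, edd] at hT
  linarith

/-- Fixed-steplength linear convergence to a noise neighborhood (Theorem 4.1). -/
theorem fixed_step_linear_convergence
    (n : ℕ) (φ : EuclideanSpace ℝ (Fin n) → ℝ)
    (μ L : ℝ) (hμ : 0 < μ) (hμL : μ ≤ L)
    (hφ : ContDiff ℝ 2 φ)
    (hHessLower : ∀ x v : EuclideanSpace ℝ (Fin n),
      μ * ‖v‖ ^ 2 ≤ (iteratedFDeriv ℝ 2 φ x) ![v, v])
    (hHessUpper : ∀ x v : EuclideanSpace ℝ (Fin n),
      (iteratedFDeriv ℝ 2 φ x) ![v, v] ≤ L * ‖v‖ ^ 2)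
    (xstar : EuclideanSpace ℝ (Fin n)) (hmin : ∀ x, φ xstar ≤ φ x)
    (e : EuclideanSpace ℝ (Fin n) → EuclideanSpace ℝ (Fin n))
    (εg : ℝ) (hεg : 0 < εg) (he : ∀ x, ‖e x‖ ≤ εg)
    (α : ℝ) (hα : 0 < α) (hαL : α ≤ 1 / L)
    (x g : ℕ → EuclideanSpace ℝ (Fin n))
    (hg : ∀ k, g k = gradient φ (x k) + e (x k))
    (hx : ∀ k, x (k + 1) = x k - α • g k) :
    ∀ k, φ (x (k + 1)) - (φ xstar + εg ^ 2 / (2 * μ)) ≤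
      (1 - α * μ) * (φ (x k) - (φ xstar + εg ^ 2 / (2 * μ))) := by
  have hL : 0 < L := lt_of_lt_of_le hμ hμL
  have hαL' : α * L ≤ 1 := by
    rw [le_div_iff₀ hL] at hαL; linarith
  have hgrad : ∀ y w : EuclideanSpace ℝ (Fin n),
      fderiv ℝ φ y w = @inner ℝ _ _ (gradient φ y) w := by
    intro y w
    rw [gradient, InnerProductSpace.toDual_symm_apply]
  intro k
  set y := x k with hy
  set d := gradient φ y with hd
  set ε := e y with hε
  -- PL inequality
  have hPL : 2 * μ * (φ y - φ xstar) ≤ ‖d‖ ^ 2 := by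
    obtain ⟨z, hz⟩ := aux_taylor φ hφ y (xstar - y)
    rw [add_sub_cancel] at hz
    have hH := hHessLower z (xstar - y)
    have hinner : -(‖d‖ * ‖xstar - y‖) ≤ fderiv ℝ φ y (xstar - y) := by
      rw [hgrad]
      have := abs_real_inner_le_norm d (xstar - y)
      cases abs_le.mp this with | intro h1 h2 => linarith
    nlinarith [sq_nonneg (‖d‖ - μ * ‖xstar - y‖), hmin y]
  -- descent step
  have hstep : x (k + 1) = y + (-α) • g k := by
    rw [hx k, sub_eq_add_neg, ← neg_smul]
  have hdesc : φ (x (k + 1)) ≤ φ y - (α / 2) * ‖d‖ ^ 2 + (α / 2) * εg ^ 2 := by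
    obtain ⟨z, hz⟩ := aux_taylor φ hφ y ((-α) • g k)
    rw [← hstep] at hz
    have hH := hHessUpper z ((-α) • g k)
    have hnrm : ‖(-α) • g k‖ ^ 2 = α ^ 2 * ‖g k‖ ^ 2 := by
      rw [norm_smul]; simp [abs_of_pos hα]; ring
    have hde : fderiv ℝ φ y ((-α) • g k)
        = -α * (‖d‖ ^ 2 + @inner ℝ _ _ d ε) := by
      rw [hgrad, hg k, ← hy, ← hd, ← hε, inner_smul_right, inner_add_right,
        real_inner_self_eq_norm_sq]
    have hgsq : ‖g k‖ ^ 2 = ‖d‖ ^ 2 + 2 * @inner ℝ _ _ d ε + ‖ε‖ ^ 2 := by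
      rw [hg k, ← hy, ← hd, ← hε, norm_add_sq_real]
    have hεb : ‖ε‖ ≤ εg := he y
    have hεnn : (0:ℝ) ≤ ‖ε‖ := norm_nonneg _
    have hgnn : (0:ℝ) ≤ ‖g k‖ ^ 2 := sq_nonneg _
    -- L * α^2 * ‖g k‖^2 ≤ α * ‖g k‖^2
    have hLa : L * (α ^ 2 * ‖g k‖ ^ 2) ≤ α * ‖g k‖ ^ 2 := by
      have : L * α ^ 2 ≤ α := by nlinarith
      nlinarith
    rw [hnrm] at hH
    have hb : φ (x (k + 1)) ≤ φ y + (-α * (‖d‖ ^ 2 + @inner ℝ _ _ d ε))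
        + L * (α ^ 2 * ‖g k‖ ^ 2) / 2 := by
      rw [hz, hde]; linarith
    have h1 : α * ‖g k‖ ^ 2 = α * ‖d‖ ^ 2 + 2 * α * @inner ℝ _ _ d ε + α * ‖ε‖ ^ 2 := by
      rw [hgsq]; ring
    have hε2 : ‖ε‖ ^ 2 ≤ εg ^ 2 := pow_le_pow_left₀ hεnn hεb 2
    have hε2b : α * ‖ε‖ ^ 2 ≤ α * εg ^ 2 :=
      mul_le_mul_of_nonneg_left hε2 hα.le
    linarith
  have hdiv : 2 * μ * (εg ^ 2 / (2 * μ)) = εg ^ 2 := by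
    field_simp
  have hkey := mul_le_mul_of_nonneg_left hPL (le_of_lt (half_pos hα))
  have hC : α * μ * (εg ^ 2 / (2 * μ)) = α * εg ^ 2 / 2 := by
    field_simp
  linarith [hkey, hC, hdesc]
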